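/- Let W₀, W₁ ∈ ℝ, β > 0, let p be a probability vector on Fin n, and let τ be a strictly positive probability vector on Fin n. If for every real α with 0 < α and α ≠ 1 one has β * (W₁ − W₀) ≤ D_α(p‖τ), where D_α(p‖τ) = (α − 1)⁻¹ * Real.log (∑ i in {i | p i ≠ 0}, p i ^ α * τ i ^ (1 − α)), then β * (W₁ − W₀) ≤ D₀(p‖τ) = −Real.log (∑ i in {i | p i ≠ 0}, τ i). -/

import Mathlib

open Finset

/-- If a work value is bounded by every α-Rényi divergence (`0 < α`, `α ≠ 1`), then it
is bounded by `D₀`: the catalytic deterministic work extraction bound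
`W₁ − W₀ ≤ k_B T D₀(p‖τ)`. -/
theorem work_bounded_by_D0_of_bounded_by_all_renyi
    {n : ℕ} (W₀ W₁ : ℝ) (β : ℝ) (hβ : 0 < β)
    (p : Fin n → ℝ) (hp0 : ∀ i, 0 ≤ p i) (hp1 : ∑ i, p i = 1)
    (τ : Fin n → ℝ) (hτ0 : ∀ i, 0 < τ i) (hτ1 : ∑ i, τ i = 1)
    (h : ∀ α : ℝ, 0 < α → α ≠ 1 →
      β * (W₁ - W₀) ≤ (α - 1)⁻¹ *
        Real.log (∑ i ∈ Finset.univ.filter (fun i => p i ≠ 0),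
          p i ^ α * τ i ^ (1 - α))) :
    β * (W₁ - W₀) ≤
      -Real.log (∑ i ∈ Finset.univ.filter (fun i => p i ≠ 0), τ i) := by
  set S := Finset.univ.filter (fun i => p i ≠ 0) with hS
  set g : ℝ → ℝ := fun α => ∑ i ∈ S, p i ^ α * τ i ^ (1 - α) with hg
  -- g is continuous at 0 with value ∑ i ∈ S, τ i
  have hg0 : g 0 = ∑ i ∈ S, τ i := by
    simp only [hg]
    refine Finset.sum_congr rfl fun i hi => ?_
    rw [Real.rpow_zero, sub_zero, Real.rpow_one, one_mul]
  have hSpos : 0 < ∑ i ∈ S, τ i := by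
    have hne : S.Nonempty := by
      by_contra hne
      rw [Finset.not_nonempty_iff_eq_empty] at hne
      have : ∀ i, p i = 0 := by
        intro i
        by_contra hpi
        have : i ∈ S := by simp [hS, hpi]
        simp [hne] at this
      simp [this] at hp1
    exact Finset.sum_pos (fun i _ => hτ0 i) hne
  have hcont : ContinuousAt g 0 := by
    apply tendsto_finset_sum
    intro i hi
    have hpi : 0 < p i := lt_of_le_of_ne (hp0 i) (Ne.symm (by simpa [hS] using hi))
    have c1 : ContinuousAt (fun α : ℝ => p i ^ α) 0 :=
      ContinuousAt.rpow continuousAt_const continuousAt_id (Or.inl hpi.ne')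
    have c2 : ContinuousAt (fun α : ℝ => τ i ^ (1 - α)) 0 :=
      ContinuousAt.rpow continuousAt_const (continuousAt_const.sub continuousAt_id)
        (Or.inl (hτ0 i).ne')
    exact c1.mul c2
  have htend : Filter.Tendsto (fun α => (α - 1)⁻¹ * Real.log (g α))
      (nhdsWithin 0 (Set.Ioi 0)) (nhds (-Real.log (∑ i ∈ S, τ i))) := by
    have h1 : Filter.Tendsto (fun α : ℝ => (α - 1)⁻¹) (nhdsWithin 0 (Set.Ioi 0))
        (nhds (-1 : ℝ)) := by
      have : Filter.Tendsto (fun α : ℝ => (α - 1)⁻¹) (nhds 0) (nhds ((0 - 1 : ℝ))⁻¹) :=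
        (continuousAt_id.sub continuousAt_const).inv₀ (by norm_num)
      have := this.mono_left (nhdsWithin_le_nhds (s := Set.Ioi (0:ℝ)))
      norm_num at this
      exact this
    have h2 : Filter.Tendsto (fun α => Real.log (g α)) (nhdsWithin 0 (Set.Ioi 0))
        (nhds (Real.log (∑ i ∈ S, τ i))) := by
      have hlog : ContinuousAt Real.log (g 0) := by
        apply Real.continuousAt_log
        rw [hg0]; exact hSpos.ne'
      have := (hlog.comp hcont).tendsto.mono_left
        (nhdsWithin_le_nhds (s := Set.Ioi (0:ℝ)))
      rw [Function.comp_apply, hg0] at this; exact this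
    have := h1.mul h2
    simpa [neg_one_mul] using this
  refine ge_of_tendsto htend ?_
  filter_upwards [Ioo_mem_nhdsGT_of_mem (by norm_num : (0:ℝ) ∈ Set.Ico 0 1)] with α hα
  exact h α hα.1 (ne_of_lt hα.2)
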